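/- Controlled-block-diagonal unitaries: Let n ≥ 1, let A, B ∈ U(2^n) be unitaries, and let r ≥ 1. If the block-diagonal unitary D = |0⟩⟨0|⊗A + |1⟩⟨1|⊗B (the 2×2 block matrix with diagonal blocks A and B) lies in 𝒞_r^{(n+1)}, then both A and B lie in 𝒞_r^{(n)}. -/

import Mathlib

open Matrix

/-- Index type for the computational basis of `n` qubits. -/
abbrev QIdx (n : ℕ) := Fin n → ZMod 2

/-- `2^n × 2^n` complex matrices, indexed by bitstrings. -/
abbrev QMat (n : ℕ) := Matrix (QIdx n) (QIdx n) ℂ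

/-- Single-qubit Pauli `X = [[0,1],[1,0]]`. -/
def pauliX : Matrix (ZMod 2) (ZMod 2) ℂ :=
  Matrix.of fun a b => if a = b then 0 else 1

/-- Single-qubit Pauli `Y = [[0,-i],[i,0]]`. -/
def pauliY : Matrix (ZMod 2) (ZMod 2) ℂ :=
  Matrix.of fun a b => if a = b then 0 else if a = 0 then -Complex.I else Complex.I

/-- Single-qubit Pauli `Z = [[1,0],[0,-1]]`. -/
def pauliZ : Matrix (ZMod 2) (ZMod 2) ℂ :=
  Matrix.of fun a b => if a = b then (if a = 0 then 1 else -1) else 0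

/-- The `n`-qubit Pauli group: all `ω P₁⊗⋯⊗Pₙ` with `ω ∈ {±1, ±i}` and
each `Pⱼ ∈ {I, X, Y, Z}` (the Kronecker product is written entrywise). -/
def PauliGroup (n : ℕ) : Set (QMat n) :=
  { M | ∃ (ω : ℂ) (P : Fin n → Matrix (ZMod 2) (ZMod 2) ℂ),
      (ω = 1 ∨ ω = -1 ∨ ω = Complex.I ∨ ω = -Complex.I) ∧
      (∀ j, P j = 1 ∨ P j = pauliX ∨ P j = pauliY ∨ P j = pauliZ) ∧
      M = ω • Matrix.of (fun a b => ∏ j, P j (a j) (b j)) }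

/-- Auxiliary (0-based) Clifford hierarchy: level `0` is the Pauli group, and
level `k+1` consists of the unitaries conjugating Paulis into level `k`. -/
def CHaux (n : ℕ) : ℕ → Set (QMat n)
  | 0 => PauliGroup n
  | k + 1 => { U | U ∈ Matrix.unitaryGroup (QIdx n) ℂ ∧
      ∀ P ∈ PauliGroup n, U * P * Uᴴ ∈ CHaux n k }

/-- `CLevel n k` is the `k`-th level `𝒞ₖ⁽ⁿ⁾` of the `n`-qubit Clifford hierarchy
(meaningful for `k ≥ 1`): `CLevel n 1` is the Pauli group and `CLevel n 2` is the
Clifford group. -/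
def CLevel (n k : ℕ) : Set (QMat n) := CHaux n (k - 1)

/-- `M` lies in the `n`-qubit Pauli group up to a global phase. -/
def IsPauliUpToPhase (n : ℕ) (M : QMat n) : Prop :=
  ∃ (c : ℂ) (P : QMat n), ‖c‖ = 1 ∧ P ∈ PauliGroup n ∧ M = c • P

/-- `U` has Pauli periodicity `m`: `U^(2^m)` is Pauli up to phase while no
`U^(2^t)` with `t < m` is. -/
def HasPauliPeriodicity (n m : ℕ) (U : QMat n) : Prop :=
  IsPauliUpToPhase n (U ^ (2 ^ m)) ∧ ∀ t, t < m → ¬ IsPauliUpToPhase n (U ^ (2 ^ t))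

/-- The controlled gate `CU` on `n+1` qubits (qubit `0` is the control):
the block-diagonal matrix with blocks `I` and `U`. -/
def controlled {n : ℕ} (U : QMat n) : QMat (n + 1) :=
  Matrix.of fun a b =>
    if a 0 = b 0 then
      (if a 0 = 0 then (if Fin.tail a = Fin.tail b then (1 : ℂ) else 0)
       else U (Fin.tail a) (Fin.tail b))
    else 0

/-- The block-diagonal gate `|0⟩⟨0|⊗A + |1⟩⟨1|⊗B` on `n+1` qubits. -/
def blockDiagGate {n : ℕ} (A B : QMat n) : QMat (n + 1) :=
  Matrix.of fun a b =>
    if a 0 = b 0 then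
      (if a 0 = 0 then A (Fin.tail a) (Fin.tail b) else B (Fin.tail a) (Fin.tail b))
    else 0

/-! ### Auxiliary lemmas -/

lemma zmod2_cases (x : ZMod 2) : x = 0 ∨ x = 1 := by revert x; decide

lemma zmod2_sum (f : ZMod 2 → ℂ) : ∑ x : ZMod 2, f x = f 0 + f 1 := by
  rw [show (Finset.univ : Finset (ZMod 2)) = {0, 1} by decide]
  rw [Finset.sum_pair (by decide : (0 : ZMod 2) ≠ 1)]

lemma sum_qidx_succ {n : ℕ} (f : QIdx (n + 1) → ℂ) :
    ∑ c, f c = (∑ t : QIdx n, f (Fin.cons 0 t)) + ∑ t : QIdx n, f (Fin.cons 1 t) := by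
  rw [← Equiv.sum_comp (Fin.consEquiv (fun _ : Fin (n + 1) => ZMod 2)) f]
  rw [Fintype.sum_prod_type]
  exact zmod2_sum (fun x => ∑ t : QIdx n, f (Fin.cons x t))

lemma pauli_single_unitary {P : Matrix (ZMod 2) (ZMod 2) ℂ}
    (h : P = 1 ∨ P = pauliX ∨ P = pauliY ∨ P = pauliZ) (a b : ZMod 2) :
    ∑ x : ZMod 2, P a x * (starRingEnd ℂ) (P b x) = if a = b then 1 else 0 := by
  rcases h with h | h | h | h <;> subst h <;>
    rcases zmod2_cases a with ha | ha <;> subst ha <;>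
    rcases zmod2_cases b with hb | hb <;> subst hb <;>
    simp [pauliX, pauliY, pauliZ, zmod2_sum, Matrix.one_apply, Complex.mul_conj]

lemma phase_mul_conj {ω : ℂ} (hω : ω = 1 ∨ ω = -1 ∨ ω = Complex.I ∨ ω = -Complex.I) :
    ω * (starRingEnd ℂ) ω = 1 := by
  rcases hω with h | h | h | h <;> subst h <;> simp [Complex.ext_iff]

lemma pauli_mem_unitary {n : ℕ} {M : QMat n} (h : M ∈ PauliGroup n) :
    M ∈ Matrix.unitaryGroup (QIdx n) ℂ := by
  obtain ⟨ω, P, hω, hP, rfl⟩ := h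
  rw [Matrix.mem_unitaryGroup_iff]
  ext a b
  rw [Matrix.star_eq_conjTranspose]
  simp only [Matrix.mul_apply, Matrix.conjTranspose_apply, Matrix.smul_apply,
    Matrix.of_apply, smul_eq_mul, Complex.star_def, map_mul (starRingEnd ℂ), map_prod]
  have : ∀ c : QIdx n,
      ω * (∏ j, P j (a j) (c j)) * ((starRingEnd ℂ) ω * ∏ j, (starRingEnd ℂ) (P j (b j) (c j)))
      = (ω * (starRingEnd ℂ) ω) * ∏ j, (P j (a j) (c j) * (starRingEnd ℂ) (P j (b j) (c j))) := by
    intro c; rw [Finset.prod_mul_distrib]; ring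
  rw [Finset.sum_congr rfl fun c _ => this c, ← Finset.mul_sum, phase_mul_conj hω, one_mul]
  rw [← Fintype.prod_sum (fun j (x : ZMod 2) => P j (a j) x * (starRingEnd ℂ) (P j (b j) x))]
  rw [Finset.prod_congr rfl fun j _ => pauli_single_unitary (hP j) (a j) (b j)]
  rw [Matrix.one_apply]
  by_cases hab : a = b
  · subst hab; simp
  · rw [if_neg hab]
    obtain ⟨j, hj⟩ := Function.ne_iff.mp hab
    exact Finset.prod_eq_zero (Finset.mem_univ j) (if_neg hj)

lemma blockDiag_mul {n : ℕ} (A B C E : QMat n) :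
    blockDiagGate A B * blockDiagGate C E = blockDiagGate (A * C) (B * E) := by
  ext a b
  rw [Matrix.mul_apply]
  rw [sum_qidx_succ (fun c => blockDiagGate A B a c * blockDiagGate C E c b)]
  simp only [blockDiagGate, Matrix.of_apply, Fin.cons_zero, Fin.tail_cons]
  rcases zmod2_cases (a 0) with ha | ha <;> rcases zmod2_cases (b 0) with hb | hb <;>
    simp [ha, hb, Matrix.mul_apply, (by decide : (0 : ZMod 2) ≠ 1),
      (by decide : (1 : ZMod 2) ≠ 0)]

lemma blockDiag_conjT {n : ℕ} (A B : QMat n) :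
    (blockDiagGate A B)ᴴ = blockDiagGate Aᴴ Bᴴ := by
  ext a b
  simp only [Matrix.conjTranspose_apply, blockDiagGate, Matrix.of_apply]
  rcases zmod2_cases (a 0) with ha | ha <;> rcases zmod2_cases (b 0) with hb | hb <;>
    simp [ha, hb, (by decide : (0 : ZMod 2) ≠ 1), (by decide : (1 : ZMod 2) ≠ 0)]

lemma blockDiag_pauli_mem {n : ℕ} {P : QMat n} (h : P ∈ PauliGroup n) :
    blockDiagGate P P ∈ PauliGroup (n + 1) := by
  obtain ⟨ω, Q, hω, hQ, rfl⟩ := h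
  refine ⟨ω, Fin.cons 1 Q, hω, ?_, ?_⟩
  · intro j
    refine Fin.cases ?_ ?_ j
    · exact Or.inl (by simp)
    · intro i; simpa using hQ i
  · ext a b
    simp only [blockDiagGate, Matrix.of_apply, Matrix.smul_apply, smul_eq_mul,
      Fin.prod_univ_succ, Fin.cons_zero, Fin.cons_succ, Matrix.one_apply, Fin.tail]
    rcases zmod2_cases (a 0) with ha | ha <;> rcases zmod2_cases (b 0) with hb | hb <;>
      simp [ha, hb, (by decide : (0 : ZMod 2) ≠ 1), (by decide : (1 : ZMod 2) ≠ 0), mul_comm]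

lemma unitary_ne_zero {n : ℕ} {A : QMat n} (hA : A ∈ Matrix.unitaryGroup (QIdx n) ℂ) :
    A ≠ 0 := by
  intro h
  have h1 := Matrix.mem_unitaryGroup_iff.mp hA
  rw [h, zero_mul] at h1
  have h2 := congrFun (congrFun h1 (fun _ => 0)) (fun _ => 0)
  simp [Matrix.one_apply] at h2

lemma blockDiag_pauli_base {n : ℕ} {A B : QMat n} (hA0 : A ≠ 0) (hB0 : B ≠ 0)
    (h : blockDiagGate A B ∈ PauliGroup (n + 1)) :
    A ∈ PauliGroup n ∧ B ∈ PauliGroup n := by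
  obtain ⟨ω, Q, hω, hQ, hM⟩ := h
  have hAe : ∀ a b : QIdx n, A a b = (ω * Q 0 0 0) * ∏ j, Q j.succ (a j) (b j) := by
    intro a b
    have h1 := congrFun (congrFun hM (Fin.cons 0 a)) (Fin.cons 0 b)
    simpa [blockDiagGate, Fin.cons_zero, Fin.tail_cons, Fin.prod_univ_succ, Fin.cons_succ,
      mul_assoc] using h1
  have hBe : ∀ a b : QIdx n, B a b = (ω * Q 0 1 1) * ∏ j, Q j.succ (a j) (b j) := by
    intro a b
    have h1 := congrFun (congrFun hM (Fin.cons 1 a)) (Fin.cons 1 b)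
    simpa [blockDiagGate, Fin.cons_zero, Fin.tail_cons, Fin.prod_univ_succ, Fin.cons_succ,
      (by decide : (1 : ZMod 2) ≠ 0), mul_assoc] using h1
  have hQ00 : Q 0 0 0 = 1 ∧ (Q 0 1 1 = 1 ∨ Q 0 1 1 = -1) := by
    rcases hQ 0 with h0 | h0 | h0 | h0
    · rw [h0]; exact ⟨by simp [Matrix.one_apply], Or.inl (by simp [Matrix.one_apply])⟩
    · exfalso; apply hA0; ext a b; rw [hAe a b, h0]; simp [pauliX]
    · exfalso; apply hA0; ext a b; rw [hAe a b, h0]; simp [pauliY]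
    · rw [h0]
      exact ⟨by simp [pauliZ], Or.inr (by
        simp [pauliZ, (by decide : (1 : ZMod 2) ≠ 0)])⟩
  constructor
  · refine ⟨ω, fun j => Q j.succ, hω, fun j => hQ j.succ, ?_⟩
    ext a b
    rw [hAe a b, hQ00.1]
    simp
  · refine ⟨ω * Q 0 1 1, fun j => Q j.succ, ?_, fun j => hQ j.succ, ?_⟩
    · rcases hQ00.2 with h1 | h1 <;> rw [h1] <;>
        rcases hω with h | h | h | h <;> subst h <;> simp
    · ext a b
      rw [hBe a b]
      simp

lemma blockDiag_key (n : ℕ) : ∀ (k : ℕ) (A B : QMat n),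
    A ∈ Matrix.unitaryGroup (QIdx n) ℂ → B ∈ Matrix.unitaryGroup (QIdx n) ℂ →
    blockDiagGate A B ∈ CHaux (n + 1) k → A ∈ CHaux n k ∧ B ∈ CHaux n k := by
  intro k
  induction k with
  | zero =>
    exact fun A B hA hB h =>
      blockDiag_pauli_base (unitary_ne_zero hA) (unitary_ne_zero hB) h
  | succ k ih =>
    intro A B hA hB h
    obtain ⟨-, hconj⟩ := h
    have main : ∀ P ∈ PauliGroup n, (A * P * Aᴴ ∈ CHaux n k) ∧ (B * P * Bᴴ ∈ CHaux n k) := by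
      intro P hP
      have hPu := pauli_mem_unitary hP
      have h2 := hconj (blockDiagGate P P) (blockDiag_pauli_mem hP)
      rw [blockDiag_conjT, blockDiag_mul, blockDiag_mul] at h2
      refine ih (A * P * Aᴴ) (B * P * Bᴴ) ?_ ?_ h2
      · exact mul_mem (mul_mem hA hPu)
          (by rw [← Matrix.star_eq_conjTranspose]; exact Unitary.star_mem hA)
      · exact mul_mem (mul_mem hB hPu)
          (by rw [← Matrix.star_eq_conjTranspose]; exact Unitary.star_mem hB)
    exact ⟨⟨hA, fun P hP => (main P hP).1⟩, ⟨hB, fun P hP => (main P hP).2⟩⟩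

/-- Controlled-block-diagonal unitaries: if
`D = |0⟩⟨0|⊗A + |1⟩⟨1|⊗B ∈ 𝒞_r^{(n+1)}` (r ≥ 1), then `A, B ∈ 𝒞_r^{(n)}`. -/
theorem blockDiag_level (n r : ℕ) (hn : 1 ≤ n) (hr : 1 ≤ r)
    (A B : QMat n)
    (hA : A ∈ Matrix.unitaryGroup (QIdx n) ℂ)
    (hB : B ∈ Matrix.unitaryGroup (QIdx n) ℂ)
    (hD : blockDiagGate A B ∈ CLevel (n + 1) r) :
    A ∈ CLevel n r ∧ B ∈ CLevel n r := by
  exact blockDiag_key n (r - 1) A B hA hB hD
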